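/- Let V be a finite set of n ≥ 4 vertices carrying a random graph as in the context, let s ∈ V be a source, let T ⊆ V∖{s} be a nonempty set of α terminals, and let λ ∈ (0,1]. Suppose P(C_{a,b} = 1) ≥ λ for every unordered pair {a,b} of distinct vertices, and that for every t ∈ T the random graph has the independence-in-cut property for (s,t). Assume λ²·(n−2) > ln(n−2), let d be a real with 1 < d < λ²·(n−2)/ln(n−2), and set ε = sqrt( d·ln(n−2) / (λ²·(n−2)) ). Then P( C_{s;T} ≤ (1−ε)·c_min ) ≤ 2·α / ( (n−2)^{2d} − (n−2)^{d+1} ). -/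

import Mathlib

open MeasureTheory ProbabilityTheory Finset

/-- The capacity of the cut determined by `S` (edges from `S` to its complement):
`C(S) = ∑_{a ∈ S, b ∉ S} C_{a,b}`. -/
noncomputable def cutCap {V Ω : Type*} [Fintype V] [DecidableEq V]
    (C : V → V → Ω → ℝ) (S : Finset V) (ω : Ω) : ℝ :=
  ∑ a ∈ S, ∑ b ∈ Sᶜ, C a b ω

/-- The independence-in-cut property for the pair `(s,t)`: for every `s`-`t` cut `S`,
the family of edge variables crossing the cut is mutually independent. -/
def IndepInCut {V Ω : Type*} [Fintype V] [DecidableEq V] [MeasureSpace Ω]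
    (C : V → V → Ω → ℝ) (s t : V) : Prop :=
  ∀ S : Finset V, s ∈ S → t ∉ S →
    iIndepFun
      (fun p : (S ×ˢ Sᶜ : Finset (V × V)) => C (p : V × V).1 (p : V × V).2) volume



open Real

lemma hoeffding_bern {p : ℝ} (hp0 : 0 ≤ p) (hp1 : p ≤ 1) (t : ℝ) :
    1 - p + p * exp t ≤ exp (p * t + t ^ 2 / 8) := by
  set D : ℝ → ℝ := fun x => 1 - p + p * exp x with hDdef
  have hDpos : ∀ x, 0 < D x := by
    intro x
    rcases eq_or_lt_of_le hp0 with h | h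
    · simp [hDdef, ← h]
    · have := exp_pos x; simp only [hDdef]; nlinarith
  set F : ℝ → ℝ := fun x => p * x + x ^ 2 / 8 - Real.log (D x) with hFdef
  set G : ℝ → ℝ := fun x => p + x / 4 - p * exp x / D x with hGdef
  have hDderiv : ∀ x, HasDerivAt D (p * exp x) x := fun x =>
    ((Real.hasDerivAt_exp x).const_mul p).const_add (1 - p)
  have hFderiv : ∀ x, HasDerivAt F (G x) x := by
    intro x
    have h1 : HasDerivAt (fun x : ℝ => p * x + x ^ 2 / 8) (p + x / 4) x := by
      have ha : HasDerivAt (fun x : ℝ => p * x) p x := by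
        simpa using (hasDerivAt_id x).const_mul p
      have hb : HasDerivAt (fun x : ℝ => x ^ 2 / 8) (x / 4) x := by
        have := (hasDerivAt_pow 2 x).div_const 8
        simpa using this.congr_deriv (by ring)
      exact ha.add hb
    have h2 : HasDerivAt (fun x => Real.log (D x)) (p * exp x / D x) x :=
      (hDderiv x).log (hDpos x).ne'
    exact h1.sub h2
  have hGderiv : ∀ x, HasDerivAt G (1 / 4 - p * exp x * (1 - p) / (D x) ^ 2) x := by
    intro x
    have hnum : HasDerivAt (fun x => p * exp x) (p * exp x) x :=
      (Real.hasDerivAt_exp x).const_mul p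
    have hdiv : HasDerivAt (fun x => p * exp x / D x)
        ((p * exp x * D x - p * exp x * (p * exp x)) / (D x) ^ 2) x :=
      hnum.div (hDderiv x) (hDpos x).ne'
    have h1 : HasDerivAt (fun x : ℝ => p + x / 4) (1 / 4) x := by
      simpa using ((hasDerivAt_id x).div_const 4).const_add p
    have := h1.sub hdiv
    refine this.congr_deriv ?_
    have : p * exp x * D x - p * exp x * (p * exp x) = p * exp x * (1 - p) := by
      simp only [hDdef]; ring
    rw [this]
  have hGmono : Monotone G := by
    apply monotone_of_hasDerivAt_nonneg hGderiv
    intro x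
    have h4 : 4 * (p * exp x * (1 - p)) ≤ (D x) ^ 2 := by
      have hsq : 0 ≤ ((1 - p) - p * exp x) ^ 2 := sq_nonneg _
      simp only [hDdef]; nlinarith
    have hD2 : 0 < (D x) ^ 2 := pow_pos (hDpos x) 2
    have : p * exp x * (1 - p) / (D x) ^ 2 ≤ 1 / 4 := by
      rw [div_le_div_iff₀ hD2 (by norm_num)]
      linarith
    simp only [Pi.zero_apply]
    linarith
  have hG0 : G 0 = 0 := by
    simp [hGdef, hDdef]
  have hF0 : F 0 = 0 := by
    simp [hFdef, hDdef]
  have key : 0 ≤ F t := by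
    rcases le_total 0 t with h | h
    · have hmono : MonotoneOn F (Set.Ici 0) := by
        apply monotoneOn_of_hasDerivWithinAt_nonneg (convex_Ici 0)
          (fun x _ => (hFderiv x).continuousAt.continuousWithinAt)
          (fun x hx => (hFderiv x).hasDerivWithinAt)
        intro x hx
        rw [interior_Ici] at hx
        have : G 0 ≤ G x := hGmono (le_of_lt hx)
        rw [hG0] at this; exact this
      have := hmono Set.self_mem_Ici h h
      rwa [hF0] at this
    · have hanti : AntitoneOn F (Set.Iic 0) := by
        apply antitoneOn_of_hasDerivWithinAt_nonpos (convex_Iic 0)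
          (fun x _ => (hFderiv x).continuousAt.continuousWithinAt)
          (fun x hx => (hFderiv x).hasDerivWithinAt)
        intro x hx
        rw [interior_Iic] at hx
        have : G x ≤ G 0 := hGmono (le_of_lt hx)
        rw [hG0] at this; exact this
      have := hanti h Set.self_mem_Iic h
      rwa [hF0] at this
  have hlog : Real.log (D t) ≤ p * t + t ^ 2 / 8 := by
    simp only [hFdef] at key; linarith
  calc 1 - p + p * exp t = D t := rfl
    _ = exp (Real.log (D t)) := (Real.exp_log (hDpos t)).symm
    _ ≤ exp (p * t + t ^ 2 / 8) := exp_le_exp.mpr hlog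


open MeasureTheory ProbabilityTheory Finset

lemma chernoff_cut {Ω : Type*} [MeasureSpace Ω] [IsProbabilityMeasure (volume : Measure Ω)]
    {ι : Type*} [Fintype ι] (X : ι → Ω → ℝ)
    (hmeas : ∀ i, Measurable (X i))
    (h01 : ∀ i ω, X i ω = 0 ∨ X i ω = 1)
    (hindep : iIndepFun X volume)
    {lam : ℝ} (hlam0 : 0 < lam)
    (hlow : ∀ i, lam ≤ ∫ ω, X i ω)
    {ε : ℝ} (hε0 : 0 ≤ ε) (hε1 : ε ≤ 1)
    {c : ℝ} (hc : c ≤ ∑ i, ∫ ω, X i ω) :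
    (volume {ω | (∑ i, X i) ω ≤ (1 - ε) * c}).toReal ≤
      exp (-2 * ε ^ 2 * lam ^ 2 * (Fintype.card ι : ℝ)) := by
  classical
  set E : ι → ℝ := fun i => ∫ ω, X i ω with hEdef
  have hXnonneg : ∀ i ω, 0 ≤ X i ω := by
    intro i ω; rcases h01 i ω with h | h <;> rw [h] <;> norm_num
  have hXle1 : ∀ i ω, X i ω ≤ 1 := by
    intro i ω; rcases h01 i ω with h | h <;> rw [h] <;> norm_num
  have hXint : ∀ i, Integrable (X i) := by
    intro i
    refine ⟨(hmeas i).aestronglyMeasurable, ?_⟩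
    apply HasFiniteIntegral.of_bounded (C := 1)
    filter_upwards with ω
    rw [Real.norm_eq_abs, abs_le]
    exact ⟨by linarith [hXnonneg i ω], hXle1 i ω⟩
  have hE0 : ∀ i, 0 ≤ E i := fun i => integral_nonneg (hXnonneg i)
  have hE1 : ∀ i, E i ≤ 1 := by
    intro i
    calc E i ≤ ∫ _ω, (1 : ℝ) := integral_mono (hXint i) (integrable_const 1) (hXle1 i)
    _ = 1 := by simp
  have hexp_eq : ∀ (s : ℝ) i, (fun ω => exp (s * X i ω)) = fun ω => 1 + (exp s - 1) * X i ω := by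
    intro s i
    funext ω
    rcases h01 i ω with h | h <;> rw [h] <;> simp <;> ring
  have hint : ∀ (s : ℝ) i, Integrable (fun ω => exp (s * X i ω)) := by
    intro s i
    rw [hexp_eq]
    exact (integrable_const 1).add ((hXint i).const_mul _)
  have hmgf : ∀ (s : ℝ) i, mgf (X i) volume s = 1 + (exp s - 1) * E i := by
    intro s i
    rw [mgf, hexp_eq]
    rw [integral_add (integrable_const 1) ((hXint i).const_mul _), integral_const,
      integral_const_mul]
    simp [hEdef]
  set N : ℝ := (Fintype.card ι : ℝ) with hNdef
  have hN0 : 0 ≤ N := Nat.cast_nonneg _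
  set μ : ℝ := ∑ i, E i with hμdef
  have hμN : lam * N ≤ μ := by
    have : ∑ _i : ι, lam ≤ ∑ i, E i := Finset.sum_le_sum fun i _ => hlow i
    simpa [mul_comm] using this
  rcases Nat.eq_zero_or_pos (Fintype.card ι) with hcard | hcard
  · have hN : N = 0 := by rw [hNdef, hcard]; norm_num
    rw [hN]
    simp only [mul_zero, Real.exp_zero]
    calc (volume {ω | (∑ i, X i) ω ≤ (1 - ε) * c}).toReal
        ≤ (volume (Set.univ : Set Ω)).toReal :=
          ENNReal.toReal_mono (by simp) (measure_mono (Set.subset_univ _))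
      _ = 1 := by simp
  · have hN : 0 < N := by rw [hNdef]; exact_mod_cast hcard
    set τ : ℝ := 4 * ε * μ / N with hτdef
    have hμ0 : 0 ≤ μ := Finset.sum_nonneg fun i _ => hE0 i
    have hτ0 : 0 ≤ τ := by positivity
    have hbase := measure_le_le_exp_mul_mgf (μ := volume) (X := ∑ i, X i) ((1 - ε) * c)
      (t := -τ) (by linarith)
      (by
        have := iIndepFun.integrable_exp_mul_sum (t := -τ) hindep hmeas
          (s := Finset.univ) (fun i _ => hint (-τ) i)
        simpa using this)
    have hmgfsum : mgf (∑ i, X i) volume (-τ) ≤ exp (-τ * μ + N * τ ^ 2 / 8) := by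
      have h1 : mgf (∑ i, X i) volume (-τ) = ∏ i, mgf (X i) volume (-τ) := by
        have := iIndepFun.mgf_sum (t := -τ) hindep hmeas Finset.univ
        simpa using this
      rw [h1]
      calc ∏ i, mgf (X i) volume (-τ)
          ≤ ∏ i, exp (E i * (-τ) + (-τ) ^ 2 / 8) := by
            apply Finset.prod_le_prod
            · intro i _; exact mgf_nonneg
            · intro i _
              rw [hmgf]
              calc 1 + (exp (-τ) - 1) * E i = 1 - E i + E i * exp (-τ) := by ring
                _ ≤ exp (E i * (-τ) + (-τ) ^ 2 / 8) := hoeffding_bern (hE0 i) (hE1 i) (-τ)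
        _ = exp (∑ i, (E i * (-τ) + (-τ) ^ 2 / 8)) := (Real.exp_sum _ _).symm
        _ = exp (-τ * μ + N * τ ^ 2 / 8) := by
            congr 1
            rw [Finset.sum_add_distrib, ← Finset.sum_mul, Finset.sum_const]
            simp only [← hμdef, ← hNdef, nsmul_eq_mul, Finset.card_univ]
            ring
    calc (volume {ω | (∑ i, X i) ω ≤ (1 - ε) * c}).toReal
        ≤ exp (-(-τ) * ((1 - ε) * c)) * mgf (∑ i, X i) volume (-τ) := hbase
      _ ≤ exp (τ * ((1 - ε) * μ)) * exp (-τ * μ + N * τ ^ 2 / 8) := by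
          apply mul_le_mul _ hmgfsum mgf_nonneg (exp_pos _).le
          rw [exp_le_exp]
          have : τ * ((1 - ε) * c) ≤ τ * ((1 - ε) * μ) := by
            apply mul_le_mul_of_nonneg_left _ hτ0
            apply mul_le_mul_of_nonneg_left _ (by linarith)
            exact hc
          linarith
      _ = exp (-2 * ε ^ 2 * μ ^ 2 / N) := by
          rw [← Real.exp_add]
          congr 1
          rw [hτdef]
          field_simp
          ring
      _ ≤ exp (-2 * ε ^ 2 * lam ^ 2 * N) := by
          rw [exp_le_exp]
          rw [div_le_iff₀ hN]  -- -2ε²μ²/N ≤ -2ε²λ²N ↔ ...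
          nlinarith [mul_self_le_mul_self (mul_nonneg hlam0.le hN0) hμN, sq_nonneg ε,
            mul_nonneg (mul_nonneg hε0 hε0) (mul_self_nonneg (lam * N))]

lemma per_j_bound (n : ℕ) (hn4 : 4 ≤ n) (d : ℝ) (hd1 : 1 < d) (j : ℕ) (hj : j ≤ n - 2) :
    (((n - 2).choose j : ℝ)) *
      exp (-(2 * d * Real.log ((n:ℝ) - 2) / ((n:ℝ) - 2)) * (((j+1) * (n - (j+1)) : ℕ) : ℝ)) ≤
    exp (-(2 * d * Real.log ((n:ℝ) - 2))) *
      (exp (-((d - 1) * Real.log ((n:ℝ) - 2))) ^ j + exp (-((d - 1) * Real.log ((n:ℝ) - 2))) ^ (n - 2 - j)) := by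
  set q : ℝ := (n:ℝ) - 2 with hqdef
  set L : ℝ := Real.log q with hLdef
  have hq2 : (2:ℝ) ≤ q := by
    have : (4:ℝ) ≤ (n:ℝ) := by exact_mod_cast hn4
    simp only [hqdef]; linarith
  have hq0 : 0 < q := by linarith
  have hL0 : 0 < L := Real.log_pos (by linarith)
  set r : ℝ := exp (-((d - 1) * L)) with hrdef
  have hr0 : 0 < r := exp_pos _
  set m : ℕ := min j (n - 2 - j) with hmdef
  have hm2 : 2 * m ≤ n - 2 := by omega
  have hmj : m ≤ j := min_le_left _ _
  -- cast facts
  have hqnat : ((n - 2 : ℕ) : ℝ) = q := by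
    rw [hqdef]; push_cast [Nat.cast_sub (by omega : 2 ≤ n)]; ring
  -- step 1: choose bound
  have hchoose : (((n - 2).choose j : ℝ)) ≤ q ^ m := by
    have hnat : (n - 2).choose j ≤ (n - 2) ^ m := by
      rcases min_cases j (n - 2 - j) with ⟨hmeq, _⟩ | ⟨hmeq, hlt⟩
      · rw [hmdef, hmeq]; exact Nat.choose_le_pow _ _
      · rw [hmdef, hmeq]
        have : (n - 2).choose j = (n - 2).choose (n - 2 - j) := by
          rw [Nat.choose_symm hj]
        rw [this]
        exact Nat.choose_le_pow _ _
    calc (((n - 2).choose j : ℝ)) ≤ (((n - 2) ^ m : ℕ) : ℝ) := by exact_mod_cast hnat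
      _ = q ^ m := by rw [Nat.cast_pow, hqnat]
  -- step 2: symmetrize the exponent
  have hNsym : (j + 1) * (n - (j + 1)) = (m + 1) * (n - (m + 1)) := by
    rcases min_cases j (n - 2 - j) with ⟨hmeq, _⟩ | ⟨hmeq, hlt⟩
    · rw [hmdef, hmeq]
    · rw [hmdef, hmeq]
      have h1 : n - (j + 1) = n - 2 - j + 1 := by omega
      have h2 : n - (n - 2 - j + 1) = j + 1 := by omega
      rw [h1, h2, Nat.mul_comm]
  -- step 3: the key real inequality
  have hNcast : (((m + 1) * (n - (m + 1)) : ℕ) : ℝ) = ((m:ℝ) + 1) * (q + 1 - (m:ℝ)) := by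
    have hm1n : m + 1 ≤ n := by omega
    push_cast [Nat.cast_sub hm1n]
    rw [hqdef]; ring
  set M : ℝ := (m : ℝ) with hMdef
  have hM0 : (0:ℝ) ≤ M := Nat.cast_nonneg _
  have h2M : 2 * M ≤ q := by
    calc 2 * M = ((2 * m : ℕ) : ℝ) := by push_cast; ring
      _ ≤ ((n - 2 : ℕ) : ℝ) := by exact_mod_cast hm2
      _ = q := hqnat
  have key : (M + 2) * q ≤ 2 * (M + 1) * (q + 1 - M) := by nlinarith
  have hqm : q ^ m = exp (M * L) := by
    rw [← Real.exp_log hq0, ← Real.exp_nat_mul, ← hLdef]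
  have hstep3 : q ^ m * exp (-(2 * d * L / q) * (((m+1) * (n - (m+1)) : ℕ) : ℝ)) ≤
      exp (-(2 * d * L)) * r ^ m := by
    rw [hqm, hNcast, hrdef, ← Real.exp_nat_mul, ← Real.exp_add, ← Real.exp_add]
    rw [exp_le_exp]
    have hw : (2 * d * L / q) * q = 2 * d * L := by field_simp
    have h1 : (2 * d * L / q) * ((M + 2) * q) ≤ (2 * d * L / q) * (2 * (M + 1) * (q + 1 - M)) := by
      apply mul_le_mul_of_nonneg_left key
      positivity
    have h2 : (2 * d * L / q) * ((M + 2) * q) = (M + 2) * (2 * d * L) := by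
      calc (2 * d * L / q) * ((M + 2) * q) = ((2 * d * L / q) * q) * (M + 2) := by ring
        _ = (M + 2) * (2 * d * L) := by rw [hw]; ring
    have h3 : (2 * d * L / q) * (2 * (M + 1) * (q + 1 - M)) =
        2 * ((2 * d * L / q) * ((M + 1) * (q + 1 - M))) := by ring
    rw [h2, h3] at h1
    nlinarith [h1]
  -- combine
  calc (((n - 2).choose j : ℝ)) * exp (-(2 * d * L / q) * (((j+1) * (n - (j+1)) : ℕ) : ℝ))
      ≤ q ^ m * exp (-(2 * d * L / q) * (((j+1) * (n - (j+1)) : ℕ) : ℝ)) := by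
        apply mul_le_mul_of_nonneg_right hchoose (exp_pos _).le
    _ = q ^ m * exp (-(2 * d * L / q) * (((m+1) * (n - (m+1)) : ℕ) : ℝ)) := by rw [hNsym]
    _ ≤ exp (-(2 * d * L)) * r ^ m := hstep3
    _ ≤ exp (-(2 * d * L)) * (r ^ j + r ^ (n - 2 - j)) := by
        apply mul_le_mul_of_nonneg_left _ (exp_pos _).le
        rcases min_cases j (n - 2 - j) with ⟨hmeq, _⟩ | ⟨hmeq, _⟩
        · rw [hmdef, hmeq]
          exact le_add_of_nonneg_right (pow_nonneg hr0.le _)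
        · rw [hmdef, hmeq]
          exact le_add_of_nonneg_left (pow_nonneg hr0.le _)

lemma numeric_sum (n : ℕ) (hn4 : 4 ≤ n) (d : ℝ) (hd1 : 1 < d) :
    ∑ j ∈ range (n - 1), (((n - 2).choose j : ℝ)) *
      exp (-(2 * d * Real.log ((n:ℝ) - 2) / ((n:ℝ) - 2)) * (((j+1) * (n - (j+1)) : ℕ) : ℝ)) ≤
    2 / (((n:ℝ) - 2) ^ (2 * d) - ((n:ℝ) - 2) ^ (d + 1)) := by
  set q : ℝ := (n:ℝ) - 2 with hqdef
  set L : ℝ := Real.log q with hLdef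
  have hq2 : (2:ℝ) ≤ q := by
    have : (4:ℝ) ≤ (n:ℝ) := by exact_mod_cast hn4
    simp only [hqdef]; linarith
  have hq0 : 0 < q := by linarith
  have hL0 : 0 < L := Real.log_pos (by linarith)
  set r : ℝ := exp (-((d - 1) * L)) with hrdef
  have hr0 : 0 < r := exp_pos _
  have hr1 : r < 1 := by
    rw [hrdef, exp_lt_one_iff]
    nlinarith
  calc ∑ j ∈ range (n - 1), (((n - 2).choose j : ℝ)) *
        exp (-(2 * d * L / q) * (((j+1) * (n - (j+1)) : ℕ) : ℝ))
      ≤ ∑ j ∈ range (n - 1), exp (-(2 * d * L)) * (r ^ j + r ^ (n - 2 - j)) := by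
        apply Finset.sum_le_sum
        intro j hj
        have hj' : j ≤ n - 2 := by have := mem_range.mp hj; omega
        exact per_j_bound n hn4 d hd1 j hj'
    _ = exp (-(2 * d * L)) * (∑ j ∈ range (n - 1), r ^ j + ∑ j ∈ range (n - 1), r ^ (n - 2 - j)) := by
        rw [← Finset.mul_sum, Finset.sum_add_distrib]
    _ = exp (-(2 * d * L)) * (2 * ∑ j ∈ range (n - 1), r ^ j) := by
        congr 1
        have : ∑ j ∈ range (n - 1), r ^ (n - 2 - j) = ∑ j ∈ range (n - 1), r ^ j := by
          have h := Finset.sum_range_reflect (fun j => r ^ j) (n - 1)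
          calc ∑ j ∈ range (n - 1), r ^ (n - 2 - j)
              = ∑ j ∈ range (n - 1), r ^ (n - 1 - 1 - j) := by
                apply Finset.sum_congr rfl
                intro j hj
                congr 1 <;> omega
            _ = ∑ j ∈ range (n - 1), r ^ j := h
        rw [this]; ring
    _ ≤ exp (-(2 * d * L)) * (2 * (1 / (1 - r))) := by
        apply mul_le_mul_of_nonneg_left _ (exp_pos _).le
        apply mul_le_mul_of_nonneg_left _ (by norm_num)
        have hgeom := geom_sum_eq (ne_of_lt hr1) (n - 1)
        rw [hgeom, show (r ^ (n - 1) - 1) / (r - 1) = (1 - r ^ (n - 1)) / (1 - r) from by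
          rw [← neg_div_neg_eq]; ring_nf]
        have h1r : (0:ℝ) < 1 - r := by linarith
        rw [div_le_div_iff₀ h1r h1r]
        have : r ^ (n - 1) > 0 := pow_pos hr0 _
        nlinarith
    _ = 2 / (q ^ (2 * d) - q ^ (d + 1)) := by
        have h2d : q ^ (2 * d) = exp (2 * d * L) := by
          rw [Real.rpow_def_of_pos hq0, hLdef]; ring_nf
        have hd1' : q ^ (d + 1) = exp ((d + 1) * L) := by
          rw [Real.rpow_def_of_pos hq0, hLdef]; ring_nf
        rw [h2d, hd1']
        have hfact : exp (2 * d * L) - exp ((d + 1) * L) = exp (2 * d * L) * (1 - r) := by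
          rw [hrdef, mul_sub, mul_one, ← Real.exp_add]
          congr 2
          ring
        rw [hfact]
        rw [Real.exp_neg]
        have h1r : 0 < 1 - r := by linarith
        field_simp

lemma terminal_bound {V : Type*} [Fintype V] [DecidableEq V]
    (n : ℕ) (hn : Fintype.card V = n) (hn4 : 4 ≤ n) (s t : V) (hst : s ≠ t)
    (d : ℝ) (hd1 : 1 < d) :
    ∑ S ∈ univ.filter (fun S : Finset V => s ∈ S ∧ t ∉ S),
      exp (-(2 * d * Real.log ((n:ℝ) - 2) / ((n:ℝ) - 2)) * ((S.card * (n - S.card) : ℕ) : ℝ))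
    ≤ 2 / (((n:ℝ) - 2) ^ (2 * d) - ((n:ℝ) - 2) ^ (d + 1)) := by
  classical
  set g : ℕ → ℝ := fun k =>
    exp (-(2 * d * Real.log ((n:ℝ) - 2) / ((n:ℝ) - 2)) * ((k * (n - k) : ℕ) : ℝ)) with hgdef
  set cuts : Finset (Finset V) := univ.filter (fun S : Finset V => s ∈ S ∧ t ∉ S) with hcuts
  have hmaps : ∀ S ∈ cuts, S.card - 1 ∈ range (n - 1) := by
    intro S hS
    rw [hcuts, mem_filter] at hS
    have hlt : S.card < n := by
      rw [← hn]
      apply Finset.card_lt_card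
      rw [Finset.ssubset_univ_iff]
      intro h
      exact hS.2.2 (h ▸ Finset.mem_univ t)
    rw [mem_range]
    omega
  have hfib := Finset.sum_fiberwise_of_maps_to hmaps (fun S => g S.card)
  rw [← hfib]
  calc ∑ j ∈ range (n - 1), ∑ S ∈ cuts.filter (fun S => S.card - 1 = j), g S.card
      ≤ ∑ j ∈ range (n - 1), (((n - 2).choose j : ℝ)) * g (j + 1) := by
        apply Finset.sum_le_sum
        intro j _
        have hconst : ∑ S ∈ cuts.filter (fun S => S.card - 1 = j), g S.card =
            ((cuts.filter (fun S => S.card - 1 = j)).card : ℝ) * g (j + 1) := by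
          rw [Finset.sum_congr rfl (fun S hS => ?_), Finset.sum_const, nsmul_eq_mul]
          rw [mem_filter, hcuts, mem_filter] at hS
          have hpos : 0 < S.card := Finset.card_pos.mpr ⟨s, hS.1.2.1⟩
          have : S.card = j + 1 := by omega
          rw [this]
        rw [hconst]
        apply mul_le_mul_of_nonneg_right _ (exp_pos _).le
        -- counting: injection S ↦ S.erase s into powersetCard j ((univ.erase s).erase t)
        have hcard : (cuts.filter (fun S => S.card - 1 = j)).card ≤ (n - 2).choose j := by
          have hU : ((univ.erase s).erase t).card = n - 2 := by
            rw [Finset.card_erase_of_mem (Finset.mem_erase.mpr ⟨hst.symm, Finset.mem_univ t⟩),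
              Finset.card_erase_of_mem (Finset.mem_univ s), Finset.card_univ, hn]
            omega
          have := Finset.card_le_card_of_injOn (f := fun S => S.erase s)
            (s := cuts.filter (fun S => S.card - 1 = j))
            (t := Finset.powersetCard j ((univ.erase s).erase t)) ?_ ?_
          · rwa [Finset.card_powersetCard, hU] at this
          · intro S hS
            rw [Finset.mem_coe, mem_filter, hcuts, mem_filter] at hS
            obtain ⟨⟨_, hsS, htS⟩, hcardS⟩ := hS
            rw [Finset.mem_coe, Finset.mem_powersetCard]
            constructor
            · intro x hx
              rw [Finset.mem_erase] at hx
              rw [Finset.mem_erase, Finset.mem_erase]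
              refine ⟨fun h => htS (h ▸ hx.2), hx.1, Finset.mem_univ x⟩
            · rw [Finset.card_erase_of_mem hsS]
              exact hcardS
          · intro S1 hS1 S2 hS2 heq
            rw [Finset.coe_filter, Set.mem_setOf_eq, hcuts, mem_filter] at hS1 hS2
            have h1 : insert s (S1.erase s) = S1 := Finset.insert_erase hS1.1.2.1
            have h2 : insert s (S2.erase s) = S2 := Finset.insert_erase hS2.1.2.1
            have heq' : S1.erase s = S2.erase s := heq
            rw [← h1, ← h2, heq']
        exact_mod_cast hcard
    _ ≤ 2 / (((n:ℝ) - 2) ^ (2 * d) - ((n:ℝ) - 2) ^ (d + 1)) := numeric_sum n hn4 d hd1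

/-- lower-tail half of the paper's Theorem 1.
`P(C_{s;T} ≤ (1-ε) c_min) ≤ 2 α / ((n-2)^{2d} - (n-2)^{d+1})` where
`ε = sqrt(d ln(n-2) / (λ² (n-2)))`. -/
theorem stmt_4 {V Ω : Type*} [Fintype V] [DecidableEq V] [MeasureSpace Ω]
    [IsProbabilityMeasure (volume : Measure Ω)]
    (n : ℕ) (hn : Fintype.card V = n) (hn4 : 4 ≤ n)
    (s : V) (T : Finset V) (hT : T.Nonempty) (hsT : s ∉ T)
    (α : ℕ) (hα : α = T.card)
    (lam : ℝ) (hlam0 : 0 < lam) (hlam1 : lam ≤ 1)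
    (C : V → V → Ω → ℝ)
    (hsymm : ∀ a b, C a b = C b a)
    (hmeas : ∀ a b, Measurable (C a b))
    (h01 : ∀ a b ω, C a b ω = 0 ∨ C a b ω = 1)
    (hlow : ∀ a b : V, a ≠ b → ENNReal.ofReal lam ≤ volume {ω | C a b ω = 1})
    (hindep : ∀ t ∈ T, IndepInCut C s t)
    (hln : Real.log ((n : ℝ) - 2) < lam ^ 2 * ((n : ℝ) - 2))
    (d : ℝ) (hd1 : 1 < d) (hd2 : d < lam ^ 2 * ((n : ℝ) - 2) / Real.log ((n : ℝ) - 2))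
    (ε : ℝ) (hε : ε = Real.sqrt (d * Real.log ((n : ℝ) - 2) / (lam ^ 2 * ((n : ℝ) - 2))))
    (cmin : ℝ)
    (hcmin : cmin = sInf {x : ℝ | ∃ t ∈ T, ∃ S : Finset V, s ∈ S ∧ t ∉ S ∧
        x = ∫ ω, cutCap C S ω}) :
    volume {ω | sInf {x : ℝ | ∃ t ∈ T, ∃ S : Finset V, s ∈ S ∧ t ∉ S ∧
          x = cutCap C S ω} ≤ (1 - ε) * cmin}
      ≤ ENNReal.ofReal
          (2 * (α : ℝ) / (((n : ℝ) - 2) ^ (2 * d) - ((n : ℝ) - 2) ^ (d + 1))) := by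
  classical
  set q : ℝ := (n : ℝ) - 2 with hqdef
  set L : ℝ := Real.log q with hLdef
  have hq2 : (2:ℝ) ≤ q := by
    have : (4:ℝ) ≤ (n:ℝ) := by exact_mod_cast hn4
    simp only [hqdef]; linarith
  have hq0 : (0:ℝ) < q := by linarith
  have hL0 : 0 < L := Real.log_pos (by linarith)
  -- ε properties
  have hargnn : 0 ≤ d * L / (lam ^ 2 * q) := by positivity
  have hε0 : 0 ≤ ε := by rw [hε]; exact Real.sqrt_nonneg _
  have hεsq : ε ^ 2 = d * L / (lam ^ 2 * q) := by
    rw [hε]; exact Real.sq_sqrt hargnn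
  have hε1 : ε ≤ 1 := by
    rw [hε, Real.sqrt_le_one]
    rw [div_le_one (by positivity)]
    calc d * L ≤ (lam ^ 2 * q / L) * L := by
          apply mul_le_mul_of_nonneg_right (le_of_lt hd2) hL0.le
      _ = lam ^ 2 * q := by field_simp
  have hεlam : ε ^ 2 * lam ^ 2 = d * L / q := by
    rw [hεsq]
    field_simp
  -- integrals of edge variables
  have hXint : ∀ a b : V, Integrable (C a b) (volume : Measure Ω) := by
    intro a b
    refine ⟨(hmeas a b).aestronglyMeasurable, ?_⟩
    apply HasFiniteIntegral.of_bounded (C := 1)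
    filter_upwards with ω
    rcases h01 a b ω with h | h <;> rw [h] <;> norm_num
  have hEdge : ∀ a b : V, a ≠ b → lam ≤ ∫ ω, C a b ω := by
    intro a b hab
    have hset : MeasurableSet {ω | C a b ω = 1} := (hmeas a b) (measurableSet_singleton 1)
    have hind : C a b = Set.indicator {ω | C a b ω = 1} (fun _ => (1:ℝ)) := by
      funext ω
      simp only [Set.indicator_apply, Set.mem_setOf_eq]
      by_cases h : C a b ω = 1
      · rw [if_pos h]; exact h
      · rw [if_neg h]
        rcases h01 a b ω with h' | h'
        · exact h'
        · exact absurd h' h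
    rw [hind]
    have : ∫ ω, Set.indicator {ω | C a b ω = 1} (fun _ => (1:ℝ)) ω =
        (volume {ω | C a b ω = 1}).toReal := by
      exact integral_indicator_one hset
    rw [this]
    calc lam = (ENNReal.ofReal lam).toReal := (ENNReal.toReal_ofReal hlam0.le).symm
      _ ≤ (volume {ω | C a b ω = 1}).toReal :=
        ENNReal.toReal_mono (measure_ne_top _ _) (hlow a b hab)
  -- cmin is at most the expected capacity of each relevant cut
  have hbdd : BddBelow {x : ℝ | ∃ t ∈ T, ∃ S : Finset V, s ∈ S ∧ t ∉ S ∧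
      x = ∫ ω, cutCap C S ω} := by
    apply Set.Finite.bddBelow
    apply Set.Finite.subset (Set.finite_range (fun S : Finset V => ∫ ω, cutCap C S ω))
    rintro x ⟨t, _, S, _, _, rfl⟩
    exact ⟨S, rfl⟩
  have hcminle : ∀ (t : V), t ∈ T → ∀ (S : Finset V), s ∈ S → t ∉ S →
      cmin ≤ ∫ ω, cutCap C S ω := by
    intro t ht S hsS htS
    rw [hcmin]
    exact csInf_le hbdd ⟨t, ht, S, hsS, htS, rfl⟩
  -- the per-cut probability bound
  have hpercut : ∀ (t : V), t ∈ T → ∀ (S : Finset V), s ∈ S → t ∉ S →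
      volume {ω | cutCap C S ω ≤ (1 - ε) * cmin} ≤
        ENNReal.ofReal (Real.exp (-(2 * d * L / q) * ((S.card * (n - S.card) : ℕ) : ℝ))) := by
    intro t ht S hsS htS
    set ι := {p // p ∈ (S ×ˢ Sᶜ : Finset (V × V))} with hι
    set X : ι → Ω → ℝ := fun p => C (p : V × V).1 (p : V × V).2 with hX
    have hne : ∀ i : ι, (i : V × V).1 ≠ (i : V × V).2 := by
      intro i
      have := Finset.mem_product.mp i.2
      intro h
      rw [Finset.mem_compl] at this
      exact this.2 (h ▸ this.1)
    have hfun : cutCap C S = ∑ i : ι, X i := by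
      funext ω
      rw [Finset.sum_apply]
      calc cutCap C S ω = ∑ p ∈ S ×ˢ Sᶜ, C p.1 p.2 ω := by
            rw [cutCap, Finset.sum_product]
        _ = ∑ i : ι, X i ω := (Finset.sum_coe_sort _ _).symm
    have hcardι : (Fintype.card ι : ℝ) = ((S.card * (n - S.card) : ℕ) : ℝ) := by
      congr 1
      rw [Fintype.card_coe, Finset.card_product, Finset.card_compl, hn]
    have hchern := chernoff_cut X (fun i => hmeas _ _) (fun i ω => h01 _ _ ω)
      (hindep t ht S hsS htS) hlam0 (fun i => hEdge _ _ (hne i)) hε0 hε1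
      (c := cmin) ?hc
    case hc =>
      have h1 : ∫ ω, cutCap C S ω = ∑ i : ι, ∫ ω, X i ω := by
        have heta : (fun ω => cutCap C S ω) = (fun ω => ∑ i : ι, X i ω) := by
          funext ω; rw [hfun, Finset.sum_apply]
        rw [heta, integral_finset_sum univ (fun i _ => hXint _ _)]
      rw [← h1]
      exact hcminle t ht S hsS htS
    rw [ENNReal.le_ofReal_iff_toReal_le (measure_ne_top _ _) (Real.exp_pos _).le]
    have hseteq : {ω | cutCap C S ω ≤ (1 - ε) * cmin} =
        {ω | (∑ i : ι, X i) ω ≤ (1 - ε) * cmin} := by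
      rw [hfun]
    rw [hseteq]
    calc (volume {ω | (∑ i : ι, X i) ω ≤ (1 - ε) * cmin}).toReal
        ≤ Real.exp (-2 * ε ^ 2 * lam ^ 2 * (Fintype.card ι : ℝ)) := hchern
      _ = Real.exp (-(2 * d * L / q) * ((S.card * (n - S.card) : ℕ) : ℝ)) := by
          rw [← hcardι]
          congr 1
          rw [show -2 * ε ^ 2 * lam ^ 2 = -2 * (ε ^ 2 * lam ^ 2) by ring, hεlam]
          ring
  -- union bound
  set c : ℝ := (1 - ε) * cmin with hcdef
  set Aset : Finset V → Set Ω := fun S => {ω | cutCap C S ω ≤ c} with hAset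
  set cuts : V → Finset (Finset V) := fun t => univ.filter (fun S : Finset V => s ∈ S ∧ t ∉ S)
    with hcutsdef
  have hsub : {ω | sInf {x : ℝ | ∃ t ∈ T, ∃ S : Finset V, s ∈ S ∧ t ∉ S ∧
      x = cutCap C S ω} ≤ c} ⊆ ⋃ t ∈ T, ⋃ S ∈ cuts t, Aset S := by
    intro ω hω
    simp only [Set.mem_setOf_eq] at hω
    have hfin : {x : ℝ | ∃ t ∈ T, ∃ S : Finset V, s ∈ S ∧ t ∉ S ∧
        x = cutCap C S ω}.Finite := by
      apply Set.Finite.subset (Set.finite_range (fun S : Finset V => cutCap C S ω))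
      rintro x ⟨t, _, S, _, _, rfl⟩
      exact ⟨S, rfl⟩
    have hnonempty : {x : ℝ | ∃ t ∈ T, ∃ S : Finset V, s ∈ S ∧ t ∉ S ∧
        x = cutCap C S ω}.Nonempty := by
      obtain ⟨t0, ht0⟩ := hT
      have ht0s : t0 ∉ ({s} : Finset V) := by
        rw [Finset.mem_singleton]
        intro h
        exact hsT (h ▸ ht0)
      exact ⟨cutCap C {s} ω, t0, ht0, {s}, Finset.mem_singleton_self s, ht0s, rfl⟩
    have hmem := Set.Nonempty.csInf_mem hnonempty hfin
    obtain ⟨t, ht, S, hsS, htS, heq⟩ := hmem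
    refine Set.mem_iUnion₂.mpr ⟨t, ht, Set.mem_iUnion₂.mpr ⟨S, ?_, ?_⟩⟩
    · rw [hcutsdef]; exact Finset.mem_filter.mpr ⟨Finset.mem_univ S, hsS, htS⟩
    · rw [hAset]
      simp only [Set.mem_setOf_eq]
      rw [← heq]
      exact hω
  calc volume {ω | sInf {x : ℝ | ∃ t ∈ T, ∃ S : Finset V, s ∈ S ∧ t ∉ S ∧
        x = cutCap C S ω} ≤ (1 - ε) * cmin}
      ≤ volume (⋃ t ∈ T, ⋃ S ∈ cuts t, Aset S) := measure_mono hsub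
    _ ≤ ∑ t ∈ T, volume (⋃ S ∈ cuts t, Aset S) := measure_biUnion_finset_le T _
    _ ≤ ∑ t ∈ T, ∑ S ∈ cuts t, volume (Aset S) :=
        Finset.sum_le_sum fun t _ => measure_biUnion_finset_le (cuts t) _
    _ ≤ ∑ t ∈ T, ∑ S ∈ cuts t, ENNReal.ofReal
          (Real.exp (-(2 * d * L / q) * ((S.card * (n - S.card) : ℕ) : ℝ))) := by
        apply Finset.sum_le_sum
        intro t ht
        apply Finset.sum_le_sum
        intro S hS
        rw [hcutsdef] at hS
        obtain ⟨-, hsS, htS⟩ := Finset.mem_filter.mp hS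
        exact hpercut t ht S hsS htS
    _ = ∑ t ∈ T, ENNReal.ofReal (∑ S ∈ cuts t,
          Real.exp (-(2 * d * L / q) * ((S.card * (n - S.card) : ℕ) : ℝ))) := by
        apply Finset.sum_congr rfl
        intro t _
        rw [ENNReal.ofReal_sum_of_nonneg fun S _ => (Real.exp_pos _).le]
    _ ≤ ∑ t ∈ T, ENNReal.ofReal (2 / (q ^ (2 * d) - q ^ (d + 1))) := by
        apply Finset.sum_le_sum
        intro t ht
        apply ENNReal.ofReal_le_ofReal
        have hst : s ≠ t := fun h => hsT (h ▸ ht)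
        exact terminal_bound n hn hn4 s t hst d hd1
    _ = ENNReal.ofReal (2 * (α : ℝ) / (q ^ (2 * d) - q ^ (d + 1))) := by
        rw [Finset.sum_const, hα, nsmul_eq_mul, ← ENNReal.ofReal_natCast,
          ← ENNReal.ofReal_mul (Nat.cast_nonneg _)]
        congr 1
        ring
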